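/- Consider m = log_t n independent groups, where group j contains at most b·√t Bernoulli trials each with success probability 1/(bt), plus at most b·t Bernoulli trials each with success probability 1/(b·t^{3/2}), all trials independent. Then the expected total number of successes is O(m/√t), and the probability that the total number of successes exceeds C·m (for a suitable constant C) is at most t^{-Ω(m)} = n^{-Ω(1)}. -/

import Mathlib

open MeasureTheory ProbabilityTheory

/-- False-positive count along the query path: `m = log_t n` independent groups,
each with at most `b·√t` Bernoulli trials of probability `1/(b·t)` ("top") and at
most `b·t` trials of probability `1/(b·t^{3/2})` ("bottom"), all independent.
Then the expected total number of successes is `O(m/√t)`, and the total exceeds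
`C·m` with probability at most `n^{-Ω(1)}`. -/
theorem stmt_5 :
    ∃ C c : ℝ, 0 < C ∧ 0 < c ∧
      ∀ (Ω ι : Type) (mΩ : MeasurableSpace Ω) (μ : Measure Ω), IsProbabilityMeasure μ →
        ∀ (_ : Fintype ι) (_ : DecidableEq ι) (m b n t : ℕ),
          4 ≤ t → t ≤ n → 0 < b → 0 < m →
          (m : ℝ) = Real.log n / Real.log t →
          ∀ (X : ι → Ω → Bool) (g : ι → Fin m) (s : ι → Bool) (p : ι → ℝ),
            (∀ i, p i = if s i then 1 / ((b : ℝ) * t) else 1 / ((b : ℝ) * (t : ℝ) ^ ((3 : ℝ) / 2))) →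
            iIndepFun X μ →
            (∀ i, Measurable (X i)) →
            (∀ i, μ {ω | X i ω = true} = ENNReal.ofReal (p i)) →
            (∀ j : Fin m,
              ((Finset.univ.filter fun i => g i = j ∧ s i = true).card : ℝ) ≤ (b : ℝ) * Real.sqrt t ∧
              ((Finset.univ.filter fun i => g i = j ∧ s i = false).card : ℝ) ≤ (b : ℝ) * t) →
            (∑ i, p i) ≤ C * m / Real.sqrt t ∧
            μ {ω | C * m < ((Finset.univ.filter fun i => X i ω = true).card : ℝ)}
              ≤ ENNReal.ofReal ((n : ℝ) ^ (-c)) := by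
  refine ⟨6, 1/2, by norm_num, by norm_num, ?_⟩
  intro Ω ι mΩ μ hμ _ _ m b n t ht htn hb hm hmlog X g s p hp hindep hXmeas hX hcard
  classical
  haveI := hμ
  have htpos : (0:ℝ) < t := by
    have : (0:ℕ) < t := lt_of_lt_of_le (by norm_num) ht
    exact_mod_cast this
  have ht4 : (4:ℝ) ≤ t := by exact_mod_cast ht
  set r := Real.sqrt t with hr
  have hrpos : 0 < r := Real.sqrt_pos.2 htpos
  have hr2 : r * r = t := Real.mul_self_sqrt htpos.le
  have hr_ge2 : 2 ≤ r := by
    have h2 : (2:ℝ) = Real.sqrt 4 := by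
      rw [show (4:ℝ) = 2^2 by norm_num, Real.sqrt_sq (by norm_num : (0:ℝ) ≤ 2)]
    rw [h2, hr]
    exact Real.sqrt_le_sqrt ht4
  have hbpos : (0:ℝ) < b := by exact_mod_cast hb
  have h32 : (t:ℝ) ^ ((3:ℝ)/2) = (t:ℝ) * r := by
    rw [show (3:ℝ)/2 = 1 + 1/2 by norm_num, Real.rpow_add htpos, Real.rpow_one, hr,
      Real.sqrt_eq_rpow]
  have hp_nonneg : ∀ i, 0 ≤ p i := by
    intro i
    rw [hp i]
    split <;> positivity
  -- the sum bound
  have hgroup : ∀ j : Fin m,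
      ∑ i ∈ Finset.univ.filter (fun i => g i = j), p i ≤ 2 / r := by
    intro j
    obtain ⟨h1, h2⟩ := hcard j
    rw [← Finset.sum_filter_add_sum_filter_not (Finset.univ.filter (fun i => g i = j))
      (fun i => s i = true) p, Finset.filter_filter, Finset.filter_filter]
    have e1 : ∑ i ∈ Finset.univ.filter (fun i => g i = j ∧ s i = true), p i
        = ((Finset.univ.filter (fun i => g i = j ∧ s i = true)).card : ℝ) * (1/((b:ℝ)*t)) := by
      rw [Finset.sum_congr rfl (fun i hi => ?_), Finset.sum_const, nsmul_eq_mul]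
      simp only [Finset.mem_filter] at hi
      rw [hp i, hi.2.2]
      simp
    have e2 : ∑ i ∈ Finset.univ.filter (fun i => g i = j ∧ ¬ s i = true), p i
        = ((Finset.univ.filter (fun i => g i = j ∧ ¬ s i = true)).card : ℝ)
            * (1/((b:ℝ)*((t:ℝ)*r))) := by
      rw [Finset.sum_congr rfl (fun i hi => ?_), Finset.sum_const, nsmul_eq_mul]
      simp only [Finset.mem_filter, Bool.not_eq_true] at hi
      rw [hp i, hi.2.2, h32]
      simp
    have hcards2 : ((Finset.univ.filter (fun i => g i = j ∧ ¬ s i = true)).card : ℝ)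
        ≤ (b:ℝ) * t := by
      simpa only [Bool.not_eq_true] using h2
    rw [e1, e2]
    have b1 : ((Finset.univ.filter (fun i => g i = j ∧ s i = true)).card : ℝ) * (1/((b:ℝ)*t))
        ≤ ((b:ℝ) * r) * (1/((b:ℝ)*t)) := by
      apply mul_le_mul_of_nonneg_right h1
      positivity
    have b2 : ((Finset.univ.filter (fun i => g i = j ∧ ¬ s i = true)).card : ℝ)
          * (1/((b:ℝ)*((t:ℝ)*r)))
        ≤ ((b:ℝ) * t) * (1/((b:ℝ)*((t:ℝ)*r))) := by
      apply mul_le_mul_of_nonneg_right hcards2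
      positivity
    have key1 : ((b:ℝ) * r) * (1/((b:ℝ)*t)) = 1/r := by
      rw [← hr2]
      field_simp
    have key2 : ((b:ℝ) * t) * (1/((b:ℝ)*((t:ℝ)*r))) = 1/r := by
      field_simp
    calc _ ≤ ((b:ℝ) * r) * (1/((b:ℝ)*t)) + ((b:ℝ) * t) * (1/((b:ℝ)*((t:ℝ)*r))) :=
          add_le_add b1 b2
      _ = 2 / r := by rw [key1, key2]; ring
  have hsum : (∑ i, p i) ≤ 2 * m / r := by
    rw [← Finset.sum_fiberwise Finset.univ g p]
    calc ∑ j : Fin m, ∑ i ∈ Finset.univ.filter (fun i => g i = j), p i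
        ≤ ∑ _j : Fin m, 2 / r := Finset.sum_le_sum fun j _ => hgroup j
      _ = m * (2 / r) := by rw [Finset.sum_const, Finset.card_univ, Fintype.card_fin,
            nsmul_eq_mul]
      _ = 2 * m / r := by ring
  have hmpos : (1:ℝ) ≤ m := by exact_mod_cast hm
  refine ⟨hsum.trans ?_, ?_⟩
  · rw [div_le_div_iff₀ hrpos hrpos]
    nlinarith
  -- the Chernoff bound
  have hlogt1 : (1:ℝ) ≤ Real.log t := by
    have h4 : (1:ℝ) ≤ Real.log 4 := by
      rw [show (4:ℝ) = 2^2 by norm_num, Real.log_pow]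
      push_cast
      nlinarith [Real.log_two_gt_d9]
    exact h4.trans (Real.log_le_log (by norm_num) ht4)
  have hlogtpos : 0 < Real.log t := lt_of_lt_of_le one_pos hlogt1
  set a := Real.log t / 2 with ha
  have hapos : 0 < a := by rw [ha]; positivity
  have hexpa : Real.exp a = r := by
    rw [hr, Real.sqrt_eq_rpow, Real.rpow_def_of_pos htpos, ha]
    congr 1
    ring
  set Y : ι → Ω → ℝ := fun i ω => if X i ω = true then (1:ℝ) else 0 with hY
  have hYmeas : ∀ i, Measurable (Y i) := by
    intro i
    have : Y i = (fun x : Bool => if x = true then (1:ℝ) else 0) ∘ X i := rfl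
    rw [this]
    exact (Measurable.of_discrete).comp (hXmeas i)
  have hYindep : iIndepFun Y μ :=
    hindep.comp (fun _ (x : Bool) => if x = true then (1:ℝ) else 0)
      (fun i => Measurable.of_discrete)
  have hY01 : ∀ i ω, 0 ≤ Y i ω ∧ Y i ω ≤ 1 := by
    intro i ω
    by_cases h : X i ω = true <;> simp [hY, h]
  set Z : Ω → ℝ := ∑ i, Y i with hZ
  have hZapp : ∀ ω, Z ω = ∑ i, Y i ω := by
    intro ω
    rw [hZ, Finset.sum_apply]
  have hZmeas : Measurable Z := by
    have h1 : Measurable (fun ω => ∑ i, Y i ω) := Finset.measurable_sum _ fun i _ => hYmeas i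
    have : Z = fun ω => ∑ i, Y i ω := funext hZapp
    rw [this]; exact h1
  have hZub : ∀ ω, Z ω ≤ (Fintype.card ι : ℝ) := by
    intro ω
    rw [hZapp]
    calc ∑ i, Y i ω ≤ ∑ _i : ι, (1:ℝ) := Finset.sum_le_sum fun i _ => (hY01 i ω).2
      _ = (Fintype.card ι : ℝ) := by simp
  have hint : Integrable (fun ω => Real.exp (a * Z ω)) μ := by
    refine Integrable.mono' (integrable_const (Real.exp (a * Fintype.card ι)))
      ((Real.measurable_exp.comp (hZmeas.const_mul a)).aestronglyMeasurable)
      (ae_of_all _ fun ω => ?_)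
    rw [Real.norm_eq_abs, abs_of_pos (Real.exp_pos _)]
    exact Real.exp_le_exp.2 (mul_le_mul_of_nonneg_left (hZub ω) hapos.le)
  -- mgf of each Y i
  have hmgf : ∀ i, mgf (Y i) μ a = 1 + (r - 1) * p i := by
    intro i
    have hms : MeasurableSet {ω | X i ω = true} := hXmeas i (measurableSet_singleton true)
    have hYint : Integrable (Y i) μ := by
      refine Integrable.mono' (integrable_const 1) (hYmeas i).aestronglyMeasurable
        (ae_of_all _ fun ω => ?_)
      rw [Real.norm_eq_abs, abs_of_nonneg (hY01 i ω).1]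
      exact (hY01 i ω).2
    have hptw : (fun ω => Real.exp (a * Y i ω)) = fun ω => 1 + (r - 1) * Y i ω := by
      funext ω
      by_cases h : X i ω = true
      · simp only [hY, h, if_true, mul_one]
        rw [hexpa]; ring
      · simp [hY, h]
    have hind : Y i = Set.indicator {ω | X i ω = true} (fun _ => (1:ℝ)) := by
      funext ω
      by_cases h : X i ω = true <;> simp [hY, h, Set.indicator]
    have hEY : ∫ ω, Y i ω ∂μ = p i := by
      rw [hind, MeasureTheory.integral_indicator_const _ hms, measureReal_def, hX i, smul_eq_mul, mul_one,
        ENNReal.toReal_ofReal (hp_nonneg i)]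
    rw [mgf, hptw, integral_add (integrable_const 1) (hYint.const_mul _), integral_const,
      probReal_univ, smul_eq_mul, mul_one, integral_const_mul, hEY]
  -- mgf of the sum
  have hmgfZ : mgf Z μ a ≤ Real.exp (2 * m) := by
    rw [hZ, hYindep.mgf_sum hYmeas]
    have step1 : ∏ i, mgf (Y i) μ a ≤ ∏ i, Real.exp ((r - 1) * p i) := by
      refine Finset.prod_le_prod (fun i _ => ?_) (fun i _ => ?_)
      · rw [hmgf i]
        have := hp_nonneg i
        nlinarith
      · rw [hmgf i]
        have := Real.add_one_le_exp ((r - 1) * p i)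
        linarith
    have step2 : ∏ i, Real.exp ((r - 1) * p i) = Real.exp ((r - 1) * ∑ i, p i) := by
      rw [← Real.exp_sum, ← Finset.mul_sum]
    have step3 : (r - 1) * (∑ i, p i) ≤ 2 * m := by
      have hS0 : 0 ≤ ∑ i, p i := Finset.sum_nonneg fun i _ => hp_nonneg i
      calc (r - 1) * (∑ i, p i) ≤ r * (∑ i, p i) := by nlinarith
        _ ≤ r * (2 * m / r) := by
            apply mul_le_mul_of_nonneg_left hsum hrpos.le
        _ = 2 * m := by field_simp
    calc ∏ i, mgf (Y i) μ a ≤ ∏ i, Real.exp ((r - 1) * p i) := step1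
      _ = Real.exp ((r - 1) * ∑ i, p i) := step2
      _ ≤ Real.exp (2 * m) := Real.exp_le_exp.2 step3
  -- Chernoff bound
  have hcher := measure_ge_le_exp_mul_mgf (μ := μ) (X := Z) (t := a) (6 * m) hapos.le hint
  have hnpos : (0:ℝ) < n := by
    have : (0:ℕ) < n := lt_of_lt_of_le (lt_of_lt_of_le (by norm_num) ht) htn
    exact_mod_cast this
  have hlogn : Real.log n = m * Real.log t := by
    rw [hmlog]
    field_simp
  have hfinal : Real.exp (-a * (6 * m)) * mgf Z μ a ≤ (n:ℝ) ^ (-(1/2 : ℝ)) := by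
    have hmgfZ0 : 0 ≤ mgf Z μ a := mgf_nonneg
    calc Real.exp (-a * (6 * m)) * mgf Z μ a
        ≤ Real.exp (-a * (6 * m)) * Real.exp (2 * m) := by
          apply mul_le_mul_of_nonneg_left hmgfZ (Real.exp_pos _).le
      _ = Real.exp (-a * (6 * m) + 2 * m) := (Real.exp_add _ _).symm
      _ ≤ Real.exp (Real.log n * (-(1/2 : ℝ))) := by
          apply Real.exp_le_exp.2
          rw [hlogn, ha]
          nlinarith
      _ = (n:ℝ) ^ (-(1/2 : ℝ)) := (Real.rpow_def_of_pos hnpos _).symm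
  -- assemble
  have hseteq : {ω | (6:ℝ) * m < ((Finset.univ.filter fun i => X i ω = true).card : ℝ)}
      ⊆ {ω | (6:ℝ) * m ≤ Z ω} := by
    intro ω hω
    simp only [Set.mem_setOf_eq] at hω ⊢
    have hcount : ((Finset.univ.filter fun i => X i ω = true).card : ℝ) = Z ω := by
      rw [hZapp, hY]
      exact (Finset.sum_boole _ _).symm
    rw [← hcount]
    exact hω.le
  calc μ {ω | (6:ℝ) * m < ((Finset.univ.filter fun i => X i ω = true).card : ℝ)}
      ≤ μ {ω | (6:ℝ) * m ≤ Z ω} := measure_mono hseteq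
    _ = ENNReal.ofReal ((μ {ω | (6:ℝ) * m ≤ Z ω}).toReal) :=
        (ENNReal.ofReal_toReal (measure_ne_top μ _)).symm
    _ ≤ ENNReal.ofReal ((n:ℝ) ^ (-(1/2 : ℝ))) :=
        ENNReal.ofReal_le_ofReal (le_trans hcher hfinal)
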